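/- For every positive integer r, the abelian group H¹(SL₂⁺(ℤ/2^r), (ℤ/2^r)²) is annihilated by 2^{r-1} (in particular it vanishes for r = 1). -/

import Mathlib

set_option synthInstance.maxHeartbeats 1000000
open Matrix

instance slSMul (n : ℕ) : SMul (SpecialLinearGroup (Fin 2) (ZMod n)) (Fin 2 → ZMod n) :=
  ⟨fun g v => (g : Matrix (Fin 2) (Fin 2) (ZMod n)).mulVec v⟩

lemma slAct_def {n : ℕ} (g : SpecialLinearGroup (Fin 2) (ZMod n)) (v : Fin 2 → ZMod n) :
    g • v = (g : Matrix (Fin 2) (Fin 2) (ZMod n)).mulVec v := rfl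

/-- The tautological action of `SL₂(ℤ/n)` on `(ℤ/n)²`. -/
instance slAct (n : ℕ) : DistribMulAction (SpecialLinearGroup (Fin 2) (ZMod n)) (Fin 2 → ZMod n) where
  one_smul v := by rw [slAct_def]; simp
  mul_smul g h v := by
    rw [slAct_def, slAct_def, slAct_def]
    simp only [Matrix.mulVec_mulVec]
    rfl
  smul_zero g := Matrix.mulVec_zero _
  smul_add g x y := Matrix.mulVec_add _ x y

/-- The action of `SL₂(ℤ/2)` on the three nonzero vectors of `(ℤ/2)²`. -/
instance nzAct : MulAction (SpecialLinearGroup (Fin 2) (ZMod 2)) {v : Fin 2 → ZMod 2 // v ≠ 0} where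
  smul g v := ⟨g • (v : Fin 2 → ZMod 2), fun h => v.2 (by
    have := congrArg (fun w => g⁻¹ • w) h
    simpa [smul_smul] using this)⟩
  one_smul v := Subtype.ext (one_smul _ (v : Fin 2 → ZMod 2))
  mul_smul g h v := Subtype.ext (mul_smul g h (v : Fin 2 → ZMod 2))

/-- The sign character of `SL₂(ℤ/2) ≅ S₃`, via the permutation action on
the three nonzero vectors of `(ℤ/2)²`. -/
noncomputable def signChar : SpecialLinearGroup (Fin 2) (ZMod 2) →* ℤˣ :=
  Equiv.Perm.sign.comp
    (MulAction.toPermHom (SpecialLinearGroup (Fin 2) (ZMod 2)) {v : Fin 2 → ZMod 2 // v ≠ 0})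

/-- `SL₂⁺(ℤ/n)`: all of `SL₂(ℤ/n)` for odd `n`; for even `n` the kernel of the composition of
reduction mod 2 with the sign character `SL₂(ℤ/2) ≅ S₃ → {±1}`. -/
noncomputable def SL2Plus (n : ℕ) : Subgroup (SpecialLinearGroup (Fin 2) (ZMod n)) :=
  if h : 2 ∣ n then
    (signChar.comp (SpecialLinearGroup.map (ZMod.castHom h (ZMod 2)))).ker
  else ⊤

/-- A 1-cocycle of a group `G` with values in a `G`-module `M`. -/
def IsCocycle {G M : Type*} [Group G] [AddCommGroup M] [DistribMulAction G M]
    (f : G → M) : Prop :=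
  ∀ g h : G, f (g * h) = f g + g • f h

/-- A 1-coboundary of a group `G` with values in a `G`-module `M`.  A cohomology class in
`H¹(G, M)` is zero precisely when a representing cocycle is a coboundary. -/
def IsCoboundary {G M : Type*} [Group G] [AddCommGroup M] [DistribMulAction G M]
    (f : G → M) : Prop :=
  ∃ m : M, ∀ g : G, f g = g • m - m


instance : DecidableEq (SpecialLinearGroup (Fin 2) (ZMod 2)) :=
  fun a b => decidable_of_iff (a.1 = b.1) Subtype.ext_iff.symm

lemma no_two_torsion :
    ∀ g : SpecialLinearGroup (Fin 2) (ZMod 2), g ^ 2 = 1 → g ≠ 1 →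
      signChar (SpecialLinearGroup.map (ZMod.castHom (dvd_refl 2) (ZMod 2)) g) ≠ 1 := by
  decide

lemma mem_SL2Plus {n : ℕ} (h : 2 ∣ n) (g : SpecialLinearGroup (Fin 2) (ZMod n)) :
    g ∈ SL2Plus n ↔
      signChar (SpecialLinearGroup.map (ZMod.castHom h (ZMod 2)) g) = 1 := by
  rw [SL2Plus, dif_pos h, MonoidHom.mem_ker, MonoidHom.comp_apply]

lemma cob_of_odd {G M : Type*} [Group G] [Finite G] [AddCommGroup M] [DistribMulAction G M]
    (hcard : ¬ 2 ∣ Nat.card G) (h2 : ∀ x : M, (2 : ℕ) • x = 0)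
    (f : G → M) (hf : IsCocycle f) : IsCoboundary f := by
  cases nonempty_fintype G
  rw [Nat.card_eq_fintype_card] at hcard
  refine ⟨-(∑ h : G, f h), fun g => ?_⟩
  have hre : ∑ h : G, f (g * h) = ∑ h : G, f h :=
    Fintype.sum_equiv (Equiv.mulLeft g) _ _ (fun h => rfl)
  have h1 : ∑ h : G, f (g * h) = (Fintype.card G) • f g + g • ∑ h : G, f h := by
    calc ∑ h : G, f (g * h) = ∑ h : G, (f g + g • f h) := by
          refine Finset.sum_congr rfl fun h _ => hf g h
      _ = (Fintype.card G) • f g + g • ∑ h : G, f h := by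
          rw [Finset.sum_add_distrib, Finset.sum_const, Finset.card_univ, Finset.smul_sum]
  have hodd : Odd (Fintype.card G) := Nat.odd_iff.mpr (by omega)
  obtain ⟨k, hk⟩ := hodd
  have hcs : (Fintype.card G) • f g = f g := by
    rw [hk, add_smul, one_smul, mul_comm 2 k, mul_smul, h2, smul_zero, zero_add]
  have h3 : f g + g • ∑ h : G, f h = ∑ h : G, f h := by
    rw [← hcs]; rw [← h1, hre]
  have h4 : f g = (∑ h : G, f h) - g • ∑ h : G, f h := by
    rw [eq_sub_iff_add_eq]; exact h3
  rw [h4, smul_neg]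
  abel

lemma card_SL2Plus_two_odd : ¬ (2 ∣ Nat.card ↥(SL2Plus 2)) := by
  intro hdvd
  haveI : Fintype ↥(SL2Plus 2) := Fintype.ofFinite _
  rw [Nat.card_eq_fintype_card] at hdvd
  haveI : Fact (Nat.Prime 2) := ⟨Nat.prime_two⟩
  obtain ⟨g, hg⟩ := exists_prime_orderOf_dvd_card 2 hdvd
  have hg2 : g ^ 2 = 1 := by
    have := pow_orderOf_eq_one g; rwa [hg] at this
  have hg1 : g ≠ 1 := by
    intro h; rw [h, orderOf_one] at hg; omega
  have hmem := (mem_SL2Plus (dvd_refl 2) g.1).mp g.2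
  refine no_two_torsion g.1 ?_ ?_ hmem
  · have := congrArg Subtype.val hg2
    simpa using this
  · intro h; exact hg1 (Subtype.ext h)

lemma r1_case (f : ↥(SL2Plus 2) → (Fin 2 → ZMod 2)) (hf : IsCocycle f) : IsCoboundary f := by
  refine cob_of_odd card_SL2Plus_two_odd (fun x => ?_) f hf
  funext i
  rw [Pi.smul_apply, two_smul]
  exact CharTwo.add_self_eq_zero _


open Matrix in
/-- for `r ≥ 1`, the group `H¹(SL₂⁺(ℤ/2^r), (ℤ/2^r)²)` is annihilated by
`2^(r-1)`: for every 1-cocycle `f`, the cocycle `2^(r-1) • f` is a coboundary. -/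
theorem stmt_5 (r : ℕ) (hr : 0 < r)
    (f : SL2Plus (2 ^ r) → (Fin 2 → ZMod (2 ^ r))) (hf : IsCocycle f) :
    IsCoboundary (fun g => (2 ^ (r - 1) : ℕ) • f g) := by
  by_cases hsmall : r < 2
  · obtain rfl : r = 1 := by omega
    obtain ⟨m, hm⟩ := r1_case f hf
    exact ⟨m, fun g => by simpa using hm g⟩
  · push_neg at hsmall
    have hdvd : (2 : ℕ) ∣ 2 ^ r := dvd_pow_self 2 (by omega)
    haveI : Fact (Even (Fintype.card (Fin 2))) := ⟨by norm_num⟩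
    set z' : SpecialLinearGroup (Fin 2) (ZMod (2 ^ r)) := -1 with hz'
    have hneg1 : ZMod.castHom hdvd (ZMod 2) (-1) = 1 := by
      rw [map_neg, _root_.map_one]; decide
    have hmapone : SpecialLinearGroup.map (ZMod.castHom hdvd (ZMod 2)) z' = 1 := by
      apply Matrix.SpecialLinearGroup.ext
      intro i j
      by_cases hij : i = j
      · subst hij
        simp [z', Matrix.SpecialLinearGroup.map_apply_coe, Matrix.SpecialLinearGroup.coe_neg, Matrix.one_apply, Matrix.neg_apply, hneg1]
      · simp [z', Matrix.SpecialLinearGroup.map_apply_coe, Matrix.SpecialLinearGroup.coe_neg, Matrix.one_apply, Matrix.neg_apply, hij]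
    have hmem : z' ∈ SL2Plus (2 ^ r) := by
      rw [mem_SL2Plus hdvd, hmapone, _root_.map_one]
    set z : ↥(SL2Plus (2 ^ r)) := ⟨z', hmem⟩ with hz
    have hzact : ∀ v : Fin 2 → ZMod (2 ^ r), z • v = -v := by
      intro v
      show z' • v = -v
      rw [slAct_def, hz', SpecialLinearGroup.coe_neg, Matrix.neg_mulVec]
      simp
    have hcomm : ∀ g : ↥(SL2Plus (2 ^ r)), z * g = g * z := by
      intro g
      apply Subtype.ext
      show z' * (g : SpecialLinearGroup (Fin 2) (ZMod (2 ^ r))) = ↑g * z'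
      rw [hz', neg_one_mul, mul_neg_one]
    have key : ∀ g, (2 : ℕ) • f g = f z - g • f z := by
      intro g
      have e1 := hf z g
      rw [hcomm g, hf g z, hzact (f g)] at e1
      rw [two_smul, eq_sub_iff_add_eq, add_assoc, e1]
      abel
    refine ⟨(2 ^ (r - 2) : ℕ) • (-(f z)), fun g => ?_⟩
    have hsplit : (2 : ℕ) ^ (r - 1) = 2 ^ (r - 2) * 2 := by
      rw [← pow_succ]; congr 1; omega
    show ((2:ℕ) ^ (r - 1)) • f g = g • ((2 ^ (r - 2) : ℕ) • (-(f z))) - (2 ^ (r - 2) : ℕ) • (-(f z))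
    rw [hsplit, mul_smul, key g, smul_sub, smul_neg, smul_comm, smul_neg]
    abel
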